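/- arXiv:1804.07546 — 3 statements merged into one kernel-verified Lean document; each statement's English description precedes it below -/
import Mathlib

section
/- For every nonnegative integer k, every a, and every y with y ≠ 0 and y ≠ 1, the reflection formula (−1)^k · β_k(a, 1/y) = y · β_k(1 − a, y) holds. -/
/-- The twisted Bernoulli polynomial `β_k(x,y)`, defined (for `y ≠ 1`) by the
exponential generating function `t·e^{xt}/(y·e^t − 1) = Σ_{k≥0} β_k(x,y) t^k/k!`. -/
noncomputable def twistedBernoulli {K : Type*} [Field K] [CharZero K] (k : ℕ) (x y : K) : K :=
  (k.factorial : K) *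
    PowerSeries.coeff k
      (PowerSeries.X * PowerSeries.rescale x (PowerSeries.exp K) *
        (PowerSeries.C y * PowerSeries.exp K - 1)⁻¹)

open PowerSeries in
private lemma rescale_C' {K : Type*} [Field K] (c r : K) :
    PowerSeries.rescale c (PowerSeries.C r) = PowerSeries.C r := by
  ext n
  by_cases h : n = 0 <;> simp [PowerSeries.coeff_rescale, PowerSeries.coeff_C, h]

open PowerSeries in
theorem twistedBernoulli_reflection {K : Type*} [Field K] [CharZero K]
    (k : ℕ) (a y : K) (hy0 : y ≠ 0) (hy1 : y ≠ 1) :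
    (-1 : K) ^ k * twistedBernoulli k a y⁻¹ = y * twistedBernoulli k (1 - a) y := by
  set A : K⟦X⟧ := C y * exp K - 1 with hAdef
  set B : K⟦X⟧ := C y⁻¹ * rescale (-1) (exp K) - 1 with hBdef
  have hy1' : y⁻¹ ≠ 1 := fun h => hy1 (by field_simp at h; simp [h])
  have hA : constantCoeff A ≠ 0 := by
    simp [hAdef, constantCoeff_exp, sub_ne_zero, hy1]
  have hB0 : constantCoeff (rescale (-1) (exp K)) = 1 := by
    rw [← coeff_zero_eq_constantCoeff]
    simp [coeff_rescale, coeff_exp]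
  have hB : constantCoeff B ≠ 0 := by
    simp [hBdef, hB0, sub_ne_zero, hy1']
  have hA' : constantCoeff (C y⁻¹ * exp K - 1) ≠ 0 := by
    simp [constantCoeff_exp, sub_ne_zero, hy1']
  -- rescale (-1) of the inverse
  have hresc_inv : rescale (-1) ((C y⁻¹ * exp K - 1)⁻¹) = B⁻¹ := by
    rw [eq_inv_iff_mul_eq_one hB, hBdef]
    have : (C y⁻¹ * rescale (-1) (exp K) - 1) = rescale (-1) (C y⁻¹ * exp K - 1) := by
      simp [map_sub, map_mul, rescale_C']
    rw [this, ← map_mul, PowerSeries.inv_mul_cancel _ hA']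
    simp
  -- polynomial identity
  have hexp1 : (exp K : K⟦X⟧) = rescale 1 (exp K) := by rw [rescale_one]; rfl
  have hpoly : (-X) * rescale (-a) (exp K) * A = (C y * X * rescale (1 - a) (exp K)) * B := by
    rw [hAdef, hBdef]
    have h1 : rescale (-a) (exp K) * exp K = rescale (1 - a) (exp K) := by
      have := exp_mul_exp_eq_exp_add (-a) (1 : K)
      rw [rescale_one] at this
      simpa [show -a + 1 = 1 - a by ring] using this
    have h2 : rescale (1 - a) (exp K) * rescale (-1) (exp K) = rescale (-a) (exp K) := by
      have := exp_mul_exp_eq_exp_add (1 - a) (-1 : K)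
      simpa [show 1 - a + -1 = -a by ring] using this
    have h3 : C y * C y⁻¹ = 1 := by
      rw [← map_mul, mul_inv_cancel₀ hy0, map_one]
    calc (-X) * rescale (-a) (exp K) * (C y * exp K - 1)
        = -(C y * (X * (rescale (-a) (exp K) * exp K))) + X * rescale (-a) (exp K) := by ring
      _ = X * rescale (-a) (exp K) - C y * X * rescale (1 - a) (exp K) := by rw [h1]; ring
      _ = (C y * C y⁻¹) * X * (rescale (1 - a) (exp K) * rescale (-1) (exp K))
            - C y * X * rescale (1 - a) (exp K) := by rw [h2, h3]; ring
      _ = (C y * X * rescale (1 - a) (exp K)) * (C y⁻¹ * rescale (-1) (exp K) - 1) := by ring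
  -- divide
  have hkey : rescale (-1) (X * rescale a (exp K) * (C y⁻¹ * exp K - 1)⁻¹)
      = C y * (X * rescale (1 - a) (exp K) * A⁻¹) := by
    rw [map_mul, map_mul, hresc_inv, rescale_X, rescale_rescale]
    have hAB : A * B ≠ 0 := by
      intro h
      rcases mul_eq_zero.mp h with h | h
      · exact hA (by rw [h]; simp)
      · exact hB (by rw [h]; simp)
    apply mul_right_cancel₀ hAB
    have e1 : A * A⁻¹ = 1 := PowerSeries.mul_inv_cancel A hA
    have e2 : B * B⁻¹ = 1 := PowerSeries.mul_inv_cancel B hB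
    calc C (-1) * X * rescale (a * -1) (exp K) * B⁻¹ * (A * B)
        = ((-X) * rescale (-a) (exp K) * A) * (B * B⁻¹) := by
          rw [show a * -1 = -a by ring]
          simp only [map_neg, map_one]
          ring
      _ = ((C y * X * rescale (1 - a) (exp K)) * B) * (B * B⁻¹) := by rw [hpoly]
      _ = C y * (X * rescale (1 - a) (exp K) * A⁻¹) * (A * B) := by
          rw [e2]
          calc (C y * X * rescale (1 - a) (exp K)) * B * 1
              = C y * (X * rescale (1 - a) (exp K)) * (A * A⁻¹) * B := by rw [e1]; ring
            _ = C y * (X * rescale (1 - a) (exp K) * A⁻¹) * (A * B) := by ring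
  have hc := congrArg (coeff k) hkey
  rw [coeff_rescale] at hc
  rw [coeff_C_mul] at hc
  unfold twistedBernoulli
  rw [hAdef] at hc
  rw [show (-1 : K) ^ k * ((k.factorial : K) * coeff k
      (X * rescale a (exp K) * (C y⁻¹ * exp K - 1)⁻¹))
    = (k.factorial : K) * ((-1 : K) ^ k * coeff k
      (X * rescale a (exp K) * (C y⁻¹ * exp K - 1)⁻¹)) by ring, hc]
  ring
end

section
/- Let z ∈ ℂ_p with |z−1|_p ≥ 1 and k ≥ 1, and let μ_{k,z} be the twisted Bernoulli measure. Then ∫_{ℤ_p} 1 dμ_{k,z} = β_k(z), i.e. lim_{N→∞} Σ_{a=0}^{p^N−1} p^{N(k−1)} z^a β_k(a/p^N, z^{p^N}) = β_k(0, z). -/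
open Filter PowerSeries

section Aux
variable {K : Type*} [Field K] [CharZero K]

lemma rescale_inv_aux (c : K) (f : K⟦X⟧) (hf : constantCoeff f ≠ 0) :
    rescale c f⁻¹ = (rescale c f)⁻¹ := by
  have h : constantCoeff (rescale c f) ≠ 0 := by
    rwa [← coeff_zero_eq_constantCoeff, coeff_rescale, pow_zero, one_mul,
      coeff_zero_eq_constantCoeff]
  rw [PowerSeries.eq_inv_iff_mul_eq_one h, ← map_mul, PowerSeries.inv_mul_cancel f hf, map_one]

lemma rescale_C_aux (c d : K) : rescale c (C d) = C d := by
  ext n; cases n <;> simp [coeff_rescale]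

/-- The distribution relation for twisted Bernoulli polynomials. -/
lemma twistedBernoulli_dist (k n : ℕ) (hk : 1 ≤ k) (hn : n ≠ 0) (z : K)
    (h1 : z - 1 ≠ 0) (hn1 : z ^ n - 1 ≠ 0) :
    ∑ a ∈ Finset.range n, ((n : K)) ^ (k - 1) * z ^ a *
      twistedBernoulli k ((a : K) / (n : K)) (z ^ n) = twistedBernoulli k 0 z := by
  have hnK : (n : K) ≠ 0 := Nat.cast_ne_zero.mpr hn
  have hcA : constantCoeff (C z * exp K - 1) ≠ 0 := by
    simpa [constantCoeff_exp] using h1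
  have hcB : constantCoeff (C (z ^ n) * exp K - 1) ≠ 0 := by
    simpa [constantCoeff_exp] using hn1
  have hcD : constantCoeff ((C z * exp K) ^ n - 1) ≠ 0 := by
    simpa [constantCoeff_exp] using hn1
  -- rescaling the denominator by `n`
  have hresB : rescale (n : K) (C (z ^ n) * exp K - 1) = (C z * exp K) ^ n - 1 := by
    rw [map_sub, map_mul, map_one, rescale_C_aux, ← exp_pow_eq_rescale_exp, mul_pow, ← map_pow]
  -- geometric sum
  have hsum : (∑ a ∈ Finset.range n, (C z * exp K) ^ a)
      = ((C z * exp K) ^ n - 1) * (C z * exp K - 1)⁻¹ := by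
    have hg := geom_sum_mul (C z * exp K) n
    calc (∑ a ∈ Finset.range n, (C z * exp K) ^ a)
        = (∑ a ∈ Finset.range n, (C z * exp K) ^ a) *
            ((C z * exp K - 1) * (C z * exp K - 1)⁻¹) := by
          rw [PowerSeries.mul_inv_cancel _ hcA, mul_one]
      _ = ((C z * exp K) ^ n - 1) * (C z * exp K - 1)⁻¹ := by
          rw [← mul_assoc, hg]
  -- the key power-series identity
  have key : ∑ a ∈ Finset.range n,
      C (z ^ a) * rescale (n : K)
        (X * rescale ((a : K) / (n : K)) (exp K) * (C (z ^ n) * exp K - 1)⁻¹)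
      = C (n : K) * (X * rescale (0 : K) (exp K) * (C z * exp K - 1)⁻¹) := by
    have step : ∀ a ∈ Finset.range n,
        C (z ^ a) * rescale (n : K)
          (X * rescale ((a : K) / (n : K)) (exp K) * (C (z ^ n) * exp K - 1)⁻¹)
        = C (n : K) * X * ((C z * exp K) ^ n - 1)⁻¹ * (C z * exp K) ^ a := by
      intro a _
      rw [map_mul, map_mul, rescale_X, rescale_rescale, div_mul_cancel₀ _ hnK,
        ← exp_pow_eq_rescale_exp, rescale_inv_aux _ _ hcB, hresB, mul_pow]
      simp only [map_pow]
      ring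
    rw [Finset.sum_congr rfl step, ← Finset.mul_sum, hsum]
    have hrzero : rescale (0 : K) (exp K) = 1 := by
      rw [rescale_zero]; simp [constantCoeff_exp]
    rw [hrzero]
    calc C (n : K) * X * ((C z * exp K) ^ n - 1)⁻¹ *
          (((C z * exp K) ^ n - 1) * (C z * exp K - 1)⁻¹)
        = C (n : K) * (X * 1 * (C z * exp K - 1)⁻¹) *
            (((C z * exp K) ^ n - 1)⁻¹ * ((C z * exp K) ^ n - 1)) := by ring
      _ = C (n : K) * (X * 1 * (C z * exp K - 1)⁻¹) := by
          rw [PowerSeries.inv_mul_cancel _ hcD, mul_one]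
  -- take the `k`-th coefficient
  have hc := congrArg (fun f => (PowerSeries.coeff k) f) key
  simp only [map_sum, coeff_C_mul, coeff_rescale] at hc
  -- conclude
  unfold twistedBernoulli
  apply mul_left_cancel₀ hnK
  have hnk : (n : K) * (n : K) ^ (k - 1) = (n : K) ^ k := by
    rw [← pow_succ']; congr 1; omega
  calc (n : K) * ∑ a ∈ Finset.range n, (n : K) ^ (k - 1) * z ^ a *
        ((k.factorial : K) * (PowerSeries.coeff k)
          (X * rescale ((a : K) / (n : K)) (exp K) * (C (z ^ n) * exp K - 1)⁻¹))
      = (k.factorial : K) * ∑ a ∈ Finset.range n, z ^ a * ((n : K) ^ k *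
          (PowerSeries.coeff k)
            (X * rescale ((a : K) / (n : K)) (exp K) * (C (z ^ n) * exp K - 1)⁻¹)) := by
        rw [Finset.mul_sum, Finset.mul_sum]
        apply Finset.sum_congr rfl
        intro a _
        rw [← hnk]; ring
    _ = (k.factorial : K) * ((n : K) *
          (PowerSeries.coeff k) (X * rescale (0 : K) (exp K) * (C z * exp K - 1)⁻¹)) := by
        rw [hc]
    _ = (n : K) * ((k.factorial : K) *
          (PowerSeries.coeff k) (X * rescale (0 : K) (exp K) * (C z * exp K - 1)⁻¹)) := by
        ring

end Aux

section Norm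
variable {K : Type*} [NormedField K] [IsUltrametricDist K]

lemma norm_pow_prime_sub_one (p : ℕ) (hp : p.Prime) (hnorm : ‖(p : K)‖ = (p : ℝ)⁻¹)
    (z : K) (hz : 1 ≤ ‖z - 1‖) : 1 ≤ ‖z ^ p - 1‖ := by
  set w := z - 1 with hw
  have hzw : z = w + 1 := by rw [hw]; ring
  have hp1 : p - 1 + 1 = p := Nat.succ_pred_eq_of_pos hp.pos
  have hexp : z ^ p - 1 = w ^ p +
      ∑ j ∈ Finset.range (p - 1), w ^ (j + 1) * (p.choose (j + 1) : K) := by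
    rw [hzw, add_pow, ← hp1, Finset.sum_range_succ, Finset.sum_range_succ']
    simp only [hp1, pow_zero, one_pow, one_mul, mul_one, Nat.choose_self, Nat.cast_one,
      Nat.choose_zero_right, Nat.sub_self]
    ring
  have hwpos : (0 : ℝ) < ‖w‖ := lt_of_lt_of_le one_pos hz
  have hbound : ‖∑ j ∈ Finset.range (p - 1), w ^ (j + 1) * (p.choose (j + 1) : K)‖
      ≤ ‖(p : K)‖ * ‖w‖ ^ p := by
    apply IsUltrametricDist.norm_sum_le_of_forall_le_of_nonneg
    · positivity
    · intro j hj
      have hjp : j + 1 < p := by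
        have := Finset.mem_range.mp hj; omega
      obtain ⟨m, hm⟩ := hp.dvd_choose_self (Nat.succ_ne_zero j) hjp
      rw [norm_mul, norm_pow, hm, Nat.cast_mul, norm_mul]
      have h1 : ‖w‖ ^ (j + 1) ≤ ‖w‖ ^ p := pow_le_pow_right₀ hz (le_of_lt hjp)
      have h2 : ‖(p : K)‖ * ‖(m : K)‖ ≤ ‖(p : K)‖ * 1 := by
        have := IsUltrametricDist.norm_natCast_le_one K m
        exact mul_le_mul_of_nonneg_left this (norm_nonneg _)
      calc ‖w‖ ^ (j + 1) * (‖(p : K)‖ * ‖(m : K)‖)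
          ≤ ‖w‖ ^ p * (‖(p : K)‖ * 1) :=
            mul_le_mul h1 h2 (by positivity) (by positivity)
        _ = ‖(p : K)‖ * ‖w‖ ^ p := by ring
  have hplt : ‖(p : K)‖ < 1 := by
    rw [hnorm]
    have h2 : (1 : ℝ) < (p : ℝ) := by exact_mod_cast hp.one_lt
    rw [inv_lt_one_iff₀]; right; exact h2
  have hstrict : ‖∑ j ∈ Finset.range (p - 1), w ^ (j + 1) * (p.choose (j + 1) : K)‖
      < ‖w ^ p‖ := by
    rw [norm_pow]
    calc ‖∑ j ∈ Finset.range (p - 1), w ^ (j + 1) * (p.choose (j + 1) : K)‖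
        ≤ ‖(p : K)‖ * ‖w‖ ^ p := hbound
      _ < 1 * ‖w‖ ^ p := by
          apply mul_lt_mul_of_pos_right hplt; positivity
      _ = ‖w‖ ^ p := one_mul _
  have hle : ‖w ^ p‖ ≤ ‖z ^ p - 1‖ := by
    have heq : w ^ p = (z ^ p - 1) +
        (-(∑ j ∈ Finset.range (p - 1), w ^ (j + 1) * (p.choose (j + 1) : K))) := by
      rw [hexp]; ring
    have := IsUltrametricDist.norm_add_le_max (z ^ p - 1)
      (-(∑ j ∈ Finset.range (p - 1), w ^ (j + 1) * (p.choose (j + 1) : K)))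
    rw [← heq, norm_neg] at this
    rcases le_max_iff.mp this with h | h
    · exact h
    · exact absurd h (not_le_of_gt hstrict)
  calc (1 : ℝ) ≤ ‖w‖ ^ p := one_le_pow₀ hz
    _ = ‖w ^ p‖ := (norm_pow w p).symm
    _ ≤ ‖z ^ p - 1‖ := hle

end Norm

/-- `∫_{ℤ_p} 1 dμ_{k,z} = β_k(z)`: the Riemann sums
`Σ_{a=0}^{p^N−1} p^{N(k−1)} z^a β_k(a/p^N, z^{p^N})` converge to `β_k(0, z)`. -/
theorem integral_one_twistedBernoulli_measure
    {K : Type*} [NormedField K] [IsUltrametricDist K] [CharZero K]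
    (p : ℕ) (hp : p.Prime) (hnorm : ‖(p : K)‖ = (p : ℝ)⁻¹)
    (k : ℕ) (hk : 1 ≤ k) (z : K) (hz : 1 ≤ ‖z - 1‖) :
    Tendsto (fun N : ℕ =>
        ∑ a ∈ Finset.range (p ^ N),
          (p : K) ^ (N * (k - 1)) * z ^ a *
            twistedBernoulli k ((a : K) / (p : K) ^ N) (z ^ (p ^ N)))
      atTop (nhds (twistedBernoulli k 0 z)) := by
  have hz1 : z - 1 ≠ 0 := by
    intro h; rw [h, norm_zero] at hz; linarith
  have hzn : ∀ N : ℕ, 1 ≤ ‖z ^ (p ^ N) - 1‖ := by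
    intro N
    induction N with
    | zero => simpa using hz
    | succ N ih =>
      rw [pow_succ, pow_mul]
      exact norm_pow_prime_sub_one p hp hnorm _ ih
  have heq : ∀ N : ℕ,
      ∑ a ∈ Finset.range (p ^ N),
          (p : K) ^ (N * (k - 1)) * z ^ a *
            twistedBernoulli k ((a : K) / (p : K) ^ N) (z ^ (p ^ N))
        = twistedBernoulli k 0 z := by
    intro N
    have hsub : z ^ (p ^ N) - 1 ≠ 0 := by
      intro h
      have h1 := hzn N
      rw [h, norm_zero] at h1; linarith
    have := twistedBernoulli_dist k (p ^ N) hk (pow_ne_zero N hp.ne_zero) z hz1 hsub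
    have hcast : ((p ^ N : ℕ) : K) = (p : K) ^ N := by push_cast; ring
    rw [hcast] at this
    rw [← this]
    apply Finset.sum_congr rfl
    intro a _
    rw [← pow_mul]
  exact Tendsto.congr (fun N => (heq N).symm) tendsto_const_nhds
end

section
/- Let z ∈ ℂ_p with |z−1|_p ≥ 1 and k ≥ 1. Then ∫_{ℤ_p^*} 1 dμ_{k,z} = β_k(z) − p^{k−1} β_k(z^p). -/
open Filter PowerSeries Finset

section RootsOfUnity

variable {K : Type*} [NormedField K] [IsUltrametricDist K]

lemma norm_sub_le_max' (a b : K) : ‖a - b‖ ≤ max ‖a‖ ‖b‖ := by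
  rw [sub_eq_add_neg]
  simpa using IsUltrametricDist.norm_add_le_max a (-b)

lemma aux_step (p : ℕ) (hp : p.Prime) (hpn : ‖(p : K)‖ < 1)
    (w : K) (hw : ‖w‖ ≤ 1) (h1 : ‖w - 1‖ = 1) : ‖w ^ p - 1‖ = 1 := by
  have hbin : w ^ p = ∑ i ∈ Finset.range (p + 1), (w - 1) ^ i * 1 ^ (p - i) * (p.choose i : K) := by
    have := add_pow (w - 1) 1 p
    simpa using this
  have hr : w ^ p - 1 - (w - 1) ^ p
      = ∑ i ∈ Finset.Ico 1 p, (w - 1) ^ i * (p.choose i : K) := by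
    rw [hbin, Finset.range_eq_Ico, Finset.sum_eq_sum_Ico_succ_bot (by omega : 0 < p + 1)]
    simp only [zero_add, pow_zero, one_mul, Nat.choose_zero_right, Nat.cast_one, one_pow, mul_one]
    rw [Finset.sum_Ico_succ_top hp.pos]
    simp only [Nat.choose_self, Nat.cast_one, mul_one, one_pow, Nat.sub_self]
    ring
  have hsmall : ‖w ^ p - 1 - (w - 1) ^ p‖ < 1 := by
    rw [hr]
    have hle : ‖∑ i ∈ Finset.Ico 1 p, (w - 1) ^ i * (p.choose i : K)‖ ≤ ‖(p : K)‖ := by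
      apply IsUltrametricDist.norm_sum_le_of_forall_le_of_nonneg (norm_nonneg _)
      intro i hi
      simp only [Finset.mem_Ico] at hi
      obtain ⟨t, ht⟩ : (p : ℕ) ∣ p.choose i := hp.dvd_choose_self (by omega) (by omega)
      have h1' : ‖(w - 1) ^ i‖ = 1 := by rw [norm_pow, h1, one_pow]
      have h2' : ‖(p.choose i : K)‖ ≤ ‖(p : K)‖ := by
        rw [ht]
        push_cast
        rw [norm_mul]
        calc ‖(p : K)‖ * ‖(t : K)‖ ≤ ‖(p : K)‖ * 1 := by
              gcongr; exact IsUltrametricDist.norm_natCast_le_one K t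
          _ = ‖(p : K)‖ := mul_one _
      calc ‖(w - 1) ^ i * (p.choose i : K)‖ = 1 * ‖(p.choose i : K)‖ := by
            rw [norm_mul, h1']
        _ ≤ ‖(p : K)‖ := by rw [one_mul]; exact h2'
    exact lt_of_le_of_lt hle hpn
  have hbig : ‖(w - 1) ^ p‖ = 1 := by rw [norm_pow, h1, one_pow]
  have key : w ^ p - 1 = (w - 1) ^ p + (w ^ p - 1 - (w - 1) ^ p) := by ring
  rw [key]
  have hle : ‖(w - 1) ^ p + (w ^ p - 1 - (w - 1) ^ p)‖ ≤ 1 := by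
    refine le_trans (IsUltrametricDist.norm_add_le_max _ _) ?_
    rw [max_le_iff]
    exact ⟨le_of_eq hbig, le_of_lt hsmall⟩
  have hge : 1 ≤ ‖(w - 1) ^ p + (w ^ p - 1 - (w - 1) ^ p)‖ := by
    by_contra h
    push_neg at h
    have : ‖(w - 1) ^ p‖ < 1 := by
      have : (w - 1) ^ p = ((w - 1) ^ p + (w ^ p - 1 - (w - 1) ^ p)) - (w ^ p - 1 - (w - 1) ^ p) := by
        ring
      rw [this]
      refine lt_of_le_of_lt (norm_sub_le_max' _ _) ?_
      exact max_lt h hsmall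
    rw [hbig] at this
    exact lt_irrefl _ this
  linarith

lemma pow_pow_ne_one (p : ℕ) (hp : p.Prime) (hnorm : ‖(p : K)‖ = (p : ℝ)⁻¹)
    (z : K) (hz : 1 ≤ ‖z - 1‖) (N : ℕ) : z ^ p ^ N ≠ 1 := by
  have hpn : ‖(p : K)‖ < 1 := by
    rw [hnorm]
    rw [inv_lt_one_iff₀]
    right
    exact_mod_cast hp.one_lt
  by_cases hz1 : ‖z‖ ≤ 1
  · -- then ‖z - 1‖ = 1
    have h1 : ‖z - 1‖ = 1 := by
      refine le_antisymm ?_ hz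
      refine le_trans (norm_sub_le_max' _ _) ?_
      rw [max_le_iff]
      exact ⟨hz1, by simp⟩
    have key : ∀ N : ℕ, ‖z ^ p ^ N‖ ≤ 1 ∧ ‖z ^ p ^ N - 1‖ = 1 := by
      intro N
      induction N with
      | zero => simpa using ⟨hz1, h1⟩
      | succ n ih =>
        obtain ⟨ih1, ih2⟩ := ih
        constructor
        · rw [pow_succ, pow_mul, norm_pow]
          exact pow_le_one₀ (norm_nonneg _) ih1
        · rw [pow_succ, pow_mul]
          exact aux_step p hp hpn _ ih1 ih2
    intro hcon
    have := (key N).2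
    rw [hcon] at this
    simp at this
  · push_neg at hz1
    intro hcon
    have h1' : ‖z‖ ^ p ^ N = 1 := by rw [← norm_pow, hcon, norm_one]
    have h2' : 1 < ‖z‖ ^ p ^ N := one_lt_pow₀ hz1 (pow_pos hp.pos N).ne'
    linarith

end RootsOfUnity

section Distribution

variable {K : Type*} [Field K] [CharZero K]

lemma rescale_C'_s15 (c a : K) : rescale c (C a) = C a := by
  ext m
  simp only [coeff_rescale, coeff_C]
  split_ifs with h
  · subst h; simp
  · simp

lemma constantCoeff_rescale' (c : K) (f : K⟦X⟧) :
    constantCoeff (rescale c f) = constantCoeff f := by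
  rw [← coeff_zero_eq_constantCoeff, coeff_rescale]
  simp

/-- The distribution relation for twisted Bernoulli polynomials. -/
lemma twistedBernoulli_dist_rel (k : ℕ) (hk : 1 ≤ k) (n : ℕ) (hn0 : n ≠ 0)
    (z : K) (hz1 : z ≠ 1) (hzn : z ^ n ≠ 1) :
    ∑ a ∈ Finset.range n,
        (n : K) ^ (k - 1) * z ^ a * twistedBernoulli k ((a : K) / (n : K)) (z ^ n)
      = twistedBernoulli k 0 z := by
  have hn : (n : K) ≠ 0 := Nat.cast_ne_zero.mpr hn0
  set c : K := (n : K)⁻¹ with hc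
  have hcn : 0 ≠ 0 → True := fun _ => trivial
  set E : K⟦X⟧ := exp K with hE
  set w : K⟦X⟧ := C z * rescale c E with hw
  have hw_pow : ∀ a : ℕ, w ^ a = C (z ^ a) * rescale ((a : K) * c) E := by
    intro a
    rw [hw, mul_pow, ← map_pow, ← map_pow, exp_pow_eq_rescale_exp, rescale_rescale]
  set u : K⟦X⟧ := C (z ^ n) * E - 1 with hu
  set v : K⟦X⟧ := w - 1 with hv
  have hu0 : constantCoeff u ≠ 0 := by
    rw [hu]
    simp only [hE, map_sub, map_mul, constantCoeff_C, constantCoeff_exp, map_one, mul_one]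
    exact sub_ne_zero.mpr hzn
  have hv0 : constantCoeff v ≠ 0 := by
    rw [hv, hw]
    simp only [hE, map_sub, map_mul, constantCoeff_C, map_one, constantCoeff_rescale',
      constantCoeff_exp, mul_one]
    exact sub_ne_zero.mpr hz1
  set S : K⟦X⟧ := ∑ a ∈ Finset.range n, w ^ a with hS
  have hgeom : S * v = u := by
    rw [hS, hv, geom_sum_mul, hw_pow n, hu]
    congr 2
    rw [hc, mul_inv_cancel₀ hn, rescale_one]
    rfl
  have hSu : S * u⁻¹ = v⁻¹ := by
    calc S * u⁻¹ = S * v * v⁻¹ * u⁻¹ := by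
          rw [mul_assoc S v v⁻¹, PowerSeries.mul_inv_cancel v hv0, mul_one]
      _ = u * u⁻¹ * v⁻¹ := by rw [hgeom]; ring
      _ = v⁻¹ := by rw [PowerSeries.mul_inv_cancel u hu0, one_mul]
  set g : K⟦X⟧ := C z * E - 1 with hg
  have hg0 : constantCoeff g ≠ 0 := by
    rw [hg]
    simp only [hE, map_sub, map_mul, constantCoeff_C, constantCoeff_exp, map_one, mul_one]
    exact sub_ne_zero.mpr hz1
  have hrg : rescale c g = v := by
    rw [hg, hv, hw, map_sub, map_mul, rescale_C'_s15, map_one]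
  have hvinv : v⁻¹ = rescale c g⁻¹ := by
    rw [eq_comm, PowerSeries.eq_inv_iff_mul_eq_one hv0, ← hrg, ← map_mul, mul_comm,
      PowerSeries.mul_inv_cancel g hg0, map_one]
  -- Key power series identity
  have hP : ∑ a ∈ Finset.range n, C (z ^ a) *
      (X * rescale ((a : K) * c) E * u⁻¹) = X * v⁻¹ := by
    have h1 : ∀ a ∈ Finset.range n, C (z ^ a) * (X * rescale ((a : K) * c) E * u⁻¹)
        = X * w ^ a * u⁻¹ := by
      intro a _
      rw [hw_pow a]
      ring
    rw [Finset.sum_congr rfl h1, ← Finset.sum_mul, ← Finset.mul_sum, ← hS, mul_assoc, hSu]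
  have hXv : X * v⁻¹ = C (n : K) * rescale c (X * g⁻¹) := by
    rw [map_mul, rescale_X, hvinv]
    rw [← mul_assoc, ← mul_assoc, ← map_mul, hc, mul_inv_cancel₀ hn, map_one, one_mul]
  -- coefficient computation
  have hcoeff : (coeff k) (rescale c (X * g⁻¹)) = c ^ k * coeff k (X * g⁻¹) :=
    coeff_rescale _ _ _
  have h10 : rescale (0 : K) (exp K) = 1 := by
    rw [rescale_zero]
    simp only [RingHom.coe_comp, Function.comp_apply, constantCoeff_exp, map_one]
  have hRHS : twistedBernoulli k 0 z = (k.factorial : K) * coeff k (X * g⁻¹) := by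
    rw [twistedBernoulli, hg, hE, h10, mul_one]
  have hscal : (n : K) ^ (k - 1) * ((n : K) * c ^ k) = 1 := by
    obtain ⟨m, rfl⟩ : ∃ m, k = m + 1 := ⟨k - 1, (Nat.succ_pred_eq_of_pos hk).symm⟩
    simp only [Nat.add_sub_cancel, hc, inv_pow]
    calc (n : K) ^ m * ((n : K) * ((n : K) ^ (m + 1))⁻¹)
        = (n : K) ^ (m + 1) * ((n : K) ^ (m + 1))⁻¹ := by ring
      _ = 1 := mul_inv_cancel₀ (pow_ne_zero _ hn)
  calc ∑ a ∈ Finset.range n,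
        (n : K) ^ (k - 1) * z ^ a * twistedBernoulli k ((a : K) / (n : K)) (z ^ n)
      = (n : K) ^ (k - 1) * (k.factorial : K) *
          coeff k (∑ a ∈ Finset.range n, C (z ^ a) *
            (X * rescale ((a : K) * c) E * u⁻¹)) := by
        rw [map_sum, Finset.mul_sum]
        refine Finset.sum_congr rfl fun a _ => ?_
        rw [twistedBernoulli, coeff_C_mul, div_eq_mul_inv, ← hc, ← hE, ← hu]
        ring
    _ = (n : K) ^ (k - 1) * (k.factorial : K) *
          ((n : K) * (c ^ k * coeff k (X * g⁻¹))) := by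
        rw [hP, hXv, coeff_C_mul, hcoeff]
    _ = twistedBernoulli k 0 z := by
        rw [hRHS]
        linear_combination (k.factorial : K) * coeff k (X * g⁻¹) * hscal

end Distribution

/-- `∫_{ℤ_p^*} 1 dμ_{k,z} = β_k(z) − p^{k−1} β_k(z^p)`: the Riemann sums over residues
coprime to `p` converge to `β_k(0,z) − p^{k−1} β_k(0,z^p)`. -/
theorem integral_one_units_twistedBernoulli_measure
    {K : Type*} [NormedField K] [IsUltrametricDist K] [CharZero K]
    (p : ℕ) (hp : p.Prime) (hnorm : ‖(p : K)‖ = (p : ℝ)⁻¹)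
    (k : ℕ) (hk : 1 ≤ k) (z : K) (hz : 1 ≤ ‖z - 1‖) :
    Tendsto (fun N : ℕ =>
        ∑ a ∈ (Finset.range (p ^ N)).filter (fun a => ¬ p ∣ a),
          (p : K) ^ (N * (k - 1)) * z ^ a *
            twistedBernoulli k ((a : K) / (p : K) ^ N) (z ^ (p ^ N)))
      atTop
      (nhds (twistedBernoulli k 0 z - (p : K) ^ (k - 1) * twistedBernoulli k 0 (z ^ p))) := by
  have hne : ∀ N : ℕ, z ^ p ^ N ≠ 1 := pow_pow_ne_one p hp hnorm z hz
  have hz1 : z ≠ 1 := by simpa using hne 0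
  have hzp : z ^ p ≠ 1 := by simpa using hne 1
  have hp0 : (p : K) ≠ 0 := Nat.cast_ne_zero.mpr hp.pos.ne'
  have hconst : ∀ N : ℕ, 1 ≤ N →
      ∑ a ∈ (Finset.range (p ^ N)).filter (fun a => ¬ p ∣ a),
          (p : K) ^ (N * (k - 1)) * z ^ a *
            twistedBernoulli k ((a : K) / (p : K) ^ N) (z ^ (p ^ N))
        = twistedBernoulli k 0 z - (p : K) ^ (k - 1) * twistedBernoulli k 0 (z ^ p) := by
    intro N hN
    set F : ℕ → K := fun a => (p : K) ^ (N * (k - 1)) * z ^ a *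
      twistedBernoulli k ((a : K) / (p : K) ^ N) (z ^ (p ^ N)) with hF
    have hsplit : ∑ a ∈ (Finset.range (p ^ N)).filter (fun a => p ∣ a), F a
        + ∑ a ∈ (Finset.range (p ^ N)).filter (fun a => ¬ p ∣ a), F a
        = ∑ a ∈ Finset.range (p ^ N), F a :=
      Finset.sum_filter_add_sum_filter_not _ _ _
    have htotal : ∑ a ∈ Finset.range (p ^ N), F a = twistedBernoulli k 0 z := by
      rw [← twistedBernoulli_dist_rel k hk (p ^ N) (pow_ne_zero _ hp.pos.ne') z hz1 (hne N)]
      refine Finset.sum_congr rfl fun a _ => ?_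
      rw [hF]
      push_cast
      rw [pow_mul]
    have hdvd : ∑ a ∈ (Finset.range (p ^ N)).filter (fun a => p ∣ a), F a
        = (p : K) ^ (k - 1) * twistedBernoulli k 0 (z ^ p) := by
      have hre : ∑ a ∈ (Finset.range (p ^ N)).filter (fun a => p ∣ a), F a
          = ∑ b ∈ Finset.range (p ^ (N - 1)), F (p * b) := by
        refine Finset.sum_nbij' (fun a => a / p) (fun b => p * b) ?_ ?_ ?_ ?_ ?_
        · intro a ha
          simp only [Finset.mem_filter, Finset.mem_range] at ha
          obtain ⟨ha1, t, rfl⟩ := ha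
          simp only [Finset.mem_range]
          rw [Nat.mul_div_cancel_left _ hp.pos]
          have : p ^ N = p * p ^ (N - 1) := by
            rw [← pow_succ']
            congr 1
            omega
          rw [this] at ha1
          exact lt_of_mul_lt_mul_left ha1 (Nat.zero_le p)
        · intro b hb
          simp only [Finset.mem_range] at hb
          simp only [Finset.mem_filter, Finset.mem_range]
          constructor
          · have : p ^ N = p * p ^ (N - 1) := by
              rw [← pow_succ']; congr 1; omega
            rw [this]
            exact (Nat.mul_lt_mul_left hp.pos).mpr hb
          · exact Dvd.intro b rfl
        · intro a ha
          simp only [Finset.mem_filter] at ha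
          exact Nat.mul_div_cancel' ha.2
        · intro b _
          exact Nat.mul_div_cancel_left b hp.pos
        · intro a ha
          simp only [Finset.mem_filter] at ha
          exact congrArg F (Nat.mul_div_cancel' ha.2).symm
      rw [hre]
      have hzpn : (z ^ p) ^ p ^ (N - 1) ≠ 1 := by
        rw [← pow_mul, ← pow_succ']
        have : p ^ (N - 1 + 1) = p ^ N := by congr 1; omega
        rw [this]
        exact hne N
      rw [← twistedBernoulli_dist_rel k hk (p ^ (N - 1)) (pow_ne_zero _ hp.pos.ne')
        (z ^ p) hzp hzpn, Finset.mul_sum]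
      refine Finset.sum_congr rfl fun b _ => ?_
      simp only [hF]
      have h1 : z ^ (p * b) = (z ^ p) ^ b := by rw [pow_mul]
      have h2 : z ^ p ^ N = (z ^ p) ^ p ^ (N - 1) := by
        rw [← pow_mul, ← pow_succ']
        congr 2
        omega
      have h3 : ((p * b : ℕ) : K) / (p : K) ^ N = (b : K) / ((p ^ (N - 1) : ℕ) : K) := by
        have hq : (p : K) ^ (N - 1) ≠ 0 := pow_ne_zero _ hp0
        have hpow : (p : K) ^ N = (p : K) * (p : K) ^ (N - 1) := by
          rw [← pow_succ']; congr 1; omega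
        push_cast
        rw [hpow]
        field_simp
      have h4 : (p : K) ^ (N * (k - 1))
          = (p : K) ^ (k - 1) * ((p ^ (N - 1) : ℕ) : K) ^ (k - 1) := by
        have hNj : N * (k - 1) = (k - 1) + (N - 1) * (k - 1) := by
          conv_lhs => rw [show N = (N - 1) + 1 by omega]
          ring
        push_cast
        rw [hNj, pow_add, pow_mul]
      rw [h1, h2, h3, h4]
      ring
    have : ∑ a ∈ (Finset.range (p ^ N)).filter (fun a => ¬ p ∣ a), F a
        = twistedBernoulli k 0 z - (p : K) ^ (k - 1) * twistedBernoulli k 0 (z ^ p) := by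
      rw [← htotal, ← hsplit, hdvd]
      ring
    exact this
  refine Tendsto.congr' ?_ tendsto_const_nhds
  filter_upwards [eventually_ge_atTop 1] with N hN
  exact (hconst N hN).symm
end
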